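/- arXiv:2602.08258 — 5 statements merged into one kernel-verified Lean document; each statement's English description precedes it below -/
import Mathlib

section
/- Let R be a one-dimensional Cohen-Macaulay local ring, I an m-primary ideal, M a finitely generated torsion-free R-module, and (x) a minimal reduction of I. Then M is I-Ulrich (i.e., e_R(I,M) = length_R(M/IM)) if and only if IM = xM. -/
open IsLocalRing Filter

section Defs

variable (R : Type*) [CommRing R]

/-- The length of an `R`-module `M`: the Krull dimension of its lattice of submodules. -/
noncomputable def mlen (M : Type*) [AddCommGroup M] [Module R M] : WithBot ℕ∞ :=
  Order.krullDim (Submodule R M)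

/-- The minimal number of generators of an `R`-module. -/
noncomputable def mu (M : Type*) [AddCommGroup M] [Module R M] : ℕ :=
  sInf {n | ∃ s : Finset M, s.card = n ∧ Submodule.span R (s : Set M) = ⊤}

/-- The Hilbert–Samuel multiplicity `e_R(I, M)` of a finitely generated module over a
one-dimensional local ring with respect to an `m`-primary ideal `I`: the eventual value of
`ℓ(M/I^{n+1}M) - ℓ(M/I^n M)`. -/
noncomputable def hsMult (I : Ideal R) (M : Type*) [AddCommGroup M] [Module R M] : ℕ∞ := by
  classical
  exact if h : ∃ e : ℕ∞, ∀ᶠ n in atTop,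
      mlen R (M ⧸ (I ^ (n + 1) • (⊤ : Submodule R M))) =
        mlen R (M ⧸ (I ^ n • (⊤ : Submodule R M))) + (e : WithBot ℕ∞)
    then h.choose else 0

/-- The length of the subquotient `P/Q` for submodules `Q ⊆ P` of `M`. -/
noncomputable def qlen {M : Type*} [AddCommGroup M] [Module R M]
    (P Q : Submodule R M) : WithBot ℕ∞ :=
  mlen R (↥P ⧸ Q.comap P.subtype)

/-- `(x)` is a minimal reduction of `I` (one-dimensional situation): a principal subideal with
`I^{n+1} = x I^n` for all large `n`. -/
def IsMinimalReduction (I : Ideal R) (x : R) : Prop :=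
  x ∈ I ∧ ∃ N : ℕ, ∀ n ≥ N, I ^ (n + 1) = Ideal.span {x} * I ^ n

/-- A module is torsion-free if non zero-divisors of `R` act injectively. -/
def TorsionFree (M : Type*) [AddCommGroup M] [Module R M] : Prop :=
  ∀ r ∈ nonZeroDivisors R, ∀ m : M, r • m = 0 → m = 0

/-- The embedding dimension of a local ring: the minimal number of generators of the
maximal ideal. -/
noncomputable def embdim (R : Type*) [CommRing R] [IsLocalRing R] : ℕ :=
  sInf {n | ∃ s : Finset R, s.card = n ∧ Ideal.span (s : Set R) = maximalIdeal R}

/-- A Noetherian local ring is regular iff its embedding dimension equals its Krull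
dimension. -/
def IsRegularLocal (R : Type*) [CommRing R] [IsLocalRing R] : Prop :=
  ((embdim R : ℕ∞) : WithBot ℕ∞) = ringKrullDim R

/-- The colon `(J :_Q K)` of two `R`-submodules of an `R`-algebra `Q`. -/
def colonQ {Q : Type*} [CommRing Q] [Algebra R Q] (J K : Submodule R Q) : Submodule R Q where
  carrier := {q | ∀ k ∈ K, q * k ∈ J}
  add_mem' := by
    intro a b ha hb k hk
    simpa [add_mul] using J.add_mem (ha k hk) (hb k hk)
  zero_mem' := by intro k hk; rw [zero_mul]; exact J.zero_mem
  smul_mem' := by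
    intro c a ha k hk
    simpa [smul_mul_assoc] using J.smul_mem c (ha k hk)

end Defs


open Pointwise

section LengthLemmas
open Order
variable {R : Type*} [CommRing R] {M N : Type*} [AddCommGroup M] [Module R M]
  [AddCommGroup N] [Module R N]

instance : Nonempty (Submodule R M) := ⟨⊥⟩
instance {α : Type*} [Preorder α] [Nonempty α] : Nonempty (LTSeries α) :=
  ⟨RelSeries.singleton _ (Classical.arbitrary α)⟩

lemma mlen_nonneg : 0 ≤ mlen R M := krullDim_nonneg

lemma mlen_congr (e : M ≃ₗ[R] N) : mlen R M = mlen R N :=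
  Order.krullDim_eq_of_orderIso (Submodule.orderIsoMapComap e)

lemma aux_chain {β γ : Type*} [Preorder β] [Preorder γ] :
    ∀ {n : ℕ} (a : Fin (n+1) → β) (b : Fin (n+1) → γ), Monotone a → Monotone b →
    (∀ i : Fin n, a i.castSucc < a i.succ ∨ b i.castSucc < b i.succ) →
    ∃ (p : LTSeries β) (q : LTSeries γ), p.length + q.length = n ∧
      p.last ≤ a (Fin.last n) ∧ q.last ≤ b (Fin.last n)
  | 0, a, b, _, _, _ =>
    ⟨RelSeries.singleton _ (a 0), RelSeries.singleton _ (b 0), by simp, by simp, by simp⟩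
  | n+1, a, b, ha, hb, hs => by
    obtain ⟨p, q, hlen, hpl, hql⟩ := aux_chain (a ∘ Fin.castSucc) (b ∘ Fin.castSucc)
      (ha.comp (Fin.strictMono_castSucc.monotone)) (hb.comp (Fin.strictMono_castSucc.monotone))
      (fun i => by
        simpa only [Function.comp_apply, Fin.succ_castSucc] using hs i.castSucc)
    rcases hs (Fin.last n) with h | h
    · refine ⟨p.snoc (a (Fin.last (n+1))) (lt_of_le_of_lt hpl ?_), q, by simp [hlen]; omega, by simp, ?_⟩
      · rwa [Fin.succ_last] at h
      · exact hql.trans (hb (by simp [Fin.le_def, Nat.le_succ]))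
    · refine ⟨p, q.snoc (b (Fin.last (n+1))) (lt_of_le_of_lt hql ?_), by simp [hlen]; omega, ?_, by simp⟩
      · rwa [Fin.succ_last] at h
      · exact hpl.trans (ha (by simp [Fin.le_def, Nat.le_succ]))

lemma mlen_le_add (A : Submodule R M) : mlen R M ≤ mlen R A + mlen R (M ⧸ A) := by
  rw [mlen, Order.krullDim]
  apply iSup_le
  intro s
  set a : Fin (s.length+1) → Submodule R A := fun i => Submodule.comap A.subtype (s i) with ha_def
  set b : Fin (s.length+1) → Submodule R (M ⧸ A) := fun i => Submodule.map A.mkQ (s i) with hb_def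
  have hamono : Monotone a := fun i j h => Submodule.comap_mono (s.monotone h)
  have hbmono : Monotone b := fun i j h => Submodule.map_mono (s.monotone h)
  have strict : ∀ i : Fin s.length, a i.castSucc < a i.succ ∨ b i.castSucc < b i.succ := by
    intro i
    by_contra hcon
    push_neg at hcon
    have hle : s i.castSucc ≤ s i.succ := (s.step i).le
    have e1 : a i.castSucc = a i.succ :=
      ((hamono (Fin.castSucc_le_succ i)).lt_or_eq).resolve_left hcon.1
    have e2 : b i.castSucc = b i.succ :=
      ((hbmono (Fin.castSucc_le_succ i)).lt_or_eq).resolve_left hcon.2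
    have e1' : s i.castSucc ⊓ A = s i.succ ⊓ A := by
      have := congrArg (Submodule.map A.subtype) e1
      simpa only [ha_def, Submodule.map_comap_subtype, inf_comm] using this
    have e2' : s i.castSucc ⊔ A = s i.succ ⊔ A := by
      have := congrArg (Submodule.comap A.mkQ) e2
      simpa only [hb_def, Submodule.comap_map_mkQ, sup_comm] using this
    exact (s.step i).ne (eq_of_le_of_inf_le_of_sup_le hle e1'.ge e2'.ge)
  obtain ⟨p, q, hlen, -, -⟩ := aux_chain a b hamono hbmono strict
  calc ((s.length : ℕ) : WithBot ℕ∞) = ((p.length + q.length : ℕ) : WithBot ℕ∞) := by rw [hlen]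
    _ = (p.length : WithBot ℕ∞) + (q.length : WithBot ℕ∞) := by push_cast; ring
    _ ≤ _ := add_le_add (LTSeries.length_le_krullDim p) (LTSeries.length_le_krullDim q)

lemma add_le_mlen (A : Submodule R M) : mlen R A + mlen R (M ⧸ A) ≤ mlen R M := by
  have key : ∀ (p : LTSeries (Submodule R A)) (q : LTSeries (Submodule R (M ⧸ A))),
      (p.length : ℕ∞) + q.length ≤ ⨆ (s : LTSeries (Submodule R M)), (s.length : ℕ∞) := by
    intro p q
    let p' : LTSeries (Submodule R M) := p.map (Submodule.map A.subtype)
      (Submodule.map_strictMono_of_injective (Submodule.injective_subtype A))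
    let q' : LTSeries (Submodule R M) := q.map (Submodule.comap A.mkQ)
      (Submodule.comap_strictMono_of_surjective (Submodule.mkQ_surjective A))
    have hconn : p'.last ≤ q'.head := by
      have h1 : Submodule.map A.subtype p.last ≤ A := Submodule.map_subtype_le A _
      have h2 : A ≤ Submodule.comap A.mkQ q.head := by
        have : Submodule.comap A.mkQ ⊥ ≤ Submodule.comap A.mkQ q.head :=
          Submodule.comap_mono bot_le
        simpa [Submodule.comap_bot, Submodule.ker_mkQ] using this
      simpa [p', q'] using h1.trans h2
    rcases eq_or_lt_of_le hconn with heq | hlt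
    · have := le_iSup (fun (s : LTSeries (Submodule R M)) => (s.length : ℕ∞)) (p'.smash q' heq)
      refine le_trans (le_of_eq ?_) this
      norm_cast
    · have := le_iSup (fun (s : LTSeries (Submodule R M)) => (s.length : ℕ∞)) (p'.append q' hlt)
      refine le_trans ?_ this
      have hl : (p'.append q' hlt).length = p.length + q.length + 1 := by
        simp [p', q', RelSeries.append_length]
      rw [hl]
      push_cast
      exact le_self_add
  rw [mlen, mlen, mlen, krullDim_eq_iSup_length, krullDim_eq_iSup_length,
    krullDim_eq_iSup_length, ← WithBot.coe_add, WithBot.coe_le_coe]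
  exact ENat.iSup_add_iSup_le key

lemma mlen_add (A : Submodule R M) : mlen R M = mlen R A + mlen R (M ⧸ A) :=
  le_antisymm (mlen_le_add A) (add_le_mlen A)

lemma mlen_subsingleton (h : Subsingleton M) : mlen R M = 0 := by
  have : Subsingleton (Submodule R M) := by
    constructor
    intro A B
    ext y
    rw [Subsingleton.elim y 0]
    simp
  exact le_antisymm krullDim_nonpos_of_subsingleton mlen_nonneg

lemma krullDim_simpleOrder {α : Type*} [PartialOrder α] [BoundedOrder α] [IsSimpleOrder α] :
    Order.krullDim α = 1 := by
  apply le_antisymm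
  · rw [Order.krullDim]
    apply iSup_le
    intro s
    have hs : s.length ≤ 1 := by
      by_contra hcon
      push_neg at hcon
      have h01 : s ⟨0, by omega⟩ < s ⟨1, by omega⟩ := s.strictMono (by simp [Fin.lt_def])
      have h12 : s ⟨1, by omega⟩ < s ⟨2, by omega⟩ := s.strictMono (by simp [Fin.lt_def])
      rcases eq_bot_or_eq_top (s ⟨1, by omega⟩) with h | h
      · rw [h] at h01; exact not_lt_bot h01
      · rw [h] at h12; exact not_top_lt h12
    exact_mod_cast Nat.cast_le.mpr hs
  · have h1 := LTSeries.length_le_krullDim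
      ((RelSeries.singleton {(a, b) : α × α | a < b} (⊥:α)).snoc ⊤ (by simpa using bot_lt_top))
    simpa using h1

lemma mlen_nat_of_isFiniteLength (h : IsFiniteLength R M) :
    ∃ c : ℕ, mlen R M = ((c : ℕ∞) : WithBot ℕ∞) := by
  induction h with
  | of_subsingleton => exact ⟨0, by simpa using mlen_subsingleton ‹_›⟩
  | @of_simple_quotient M _ _ N _ _ ih =>
    obtain ⟨c, hc⟩ := ih
    refine ⟨c + 1, ?_⟩
    rw [mlen_add N, hc]
    have : mlen R (M ⧸ N) = 1 := krullDim_simpleOrder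
    rw [this]
    push_cast
    ring

lemma eq_bot_of_mlen_eq_zero (A : Submodule R M) (h : mlen R A = 0) : A = ⊥ := by
  by_contra hA
  obtain ⟨a, haA, ha0⟩ := (Submodule.ne_bot_iff A).mp hA
  have hbt : (⊥ : Submodule R A) < ⊤ := by
    refine lt_of_le_of_ne le_top ?_
    intro hbt
    have : (⟨a, haA⟩ : A) ∈ (⊥ : Submodule R A) := by rw [hbt]; trivial
    simp only [Submodule.mem_bot] at this
    exact ha0 (congrArg Subtype.val this)
  have h1 := LTSeries.length_le_krullDim
    ((RelSeries.singleton {(a, b) : Submodule R A × Submodule R A | a < b} (⊥ : Submodule R A)).snoc ⊤ (by simpa using hbt))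
  rw [show Order.krullDim (Submodule R A) = 0 from h] at h1
  norm_num at h1

lemma mem_psmul_iff {a : R} {S : Submodule R M} {m : M} :
    m ∈ a • S ↔ ∃ s ∈ S, a • s = m := by
  constructor
  · intro h
    have hm : m ∈ ((a • S : Submodule R M) : Set M) := h
    rw [Submodule.coe_pointwise_smul] at hm
    exact Set.mem_smul_set.mp hm
  · rintro ⟨s, hs, rfl⟩
    exact Submodule.smul_mem_pointwise_smul s a S hs

end LengthLemmas

section Art
variable {R : Type*} [CommRing R]

lemma isArtinian_of_torsion_max (K : Type*) [AddCommGroup K] [Module R K] [Module.Finite R K]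
    (I0 : Ideal R) [hI0 : I0.IsMaximal] (h : ∀ r ∈ I0, ∀ x : K, r • x = 0) : IsArtinian R K := by
  classical
  haveI : IsSimpleModule R (R ⧸ I0) :=
    isSimpleModule_iff_isCoatom.mpr (Ideal.isMaximal_def.mp hI0)
  haveI : IsArtinian R (R ⧸ I0) := inferInstance
  obtain ⟨s, hs⟩ := Module.Finite.fg_top (R := R) (M := K)
  haveI : IsArtinian R (s → (R ⧸ I0)) := inferInstance
  let g : ∀ _ : s, (R ⧸ I0) →ₗ[R] K := fun x =>
    I0.liftQ (LinearMap.toSpanSingleton R K (x : K))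
      (fun r hr => by simpa using h r hr (x : K))
  let f : (s → (R ⧸ I0)) →ₗ[R] K := LinearMap.lsum R (fun _ : s => (R ⧸ I0)) ℕ g
  refine isArtinian_of_surjective _ f ?_
  rw [← LinearMap.range_eq_top, eq_top_iff, ← hs, Submodule.span_le]
  intro x hx
  refine ⟨Pi.single (⟨x, hx⟩ : s) (Submodule.Quotient.mk 1), ?_⟩
  simp only [f, LinearMap.lsum_apply, LinearMap.coe_sum, Finset.sum_apply,
    LinearMap.coe_comp, Function.comp_apply, LinearMap.coe_proj]
  rw [Finset.sum_eq_single (⟨x, hx⟩ : s)]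
  · simp only [Pi.single_eq_same, g]
    rw [Submodule.liftQ_apply]
    simp
  · intro b _ hb
    simp [Pi.single_eq_of_ne hb]
  · intro hmem
    exact absurd (Finset.mem_univ _) hmem

variable [IsLocalRing R] [IsNoetherianRing R] {M : Type*} [AddCommGroup M] [Module R M]
  [Module.Finite R M]

lemma isArtinian_quot_pow_smul : ∀ k : ℕ,
    IsArtinian R (M ⧸ ((maximalIdeal R ^ k) • (⊤ : Submodule R M)))
  | 0 => by
    have : ((maximalIdeal R ^ 0) • (⊤ : Submodule R M)) = ⊤ := by
      rw [pow_zero, Ideal.one_eq_top, Submodule.top_smul]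
    haveI : Subsingleton (M ⧸ ((maximalIdeal R ^ 0) • (⊤ : Submodule R M))) := by
      rw [Submodule.Quotient.subsingleton_iff]; exact this
    infer_instance
  | (k+1) => by
    haveI ih := isArtinian_quot_pow_smul k
    set T : Submodule R M := (maximalIdeal R ^ (k+1)) • ⊤ with hT
    set S : Submodule R M := (maximalIdeal R ^ k) • ⊤ with hS
    have hTS : T ≤ S := Submodule.smul_mono_left (Ideal.pow_le_pow_right (Nat.le_succ k))
    set sub : Submodule R (M ⧸ T) := Submodule.map T.mkQ S with hsub
    haveI h1 : IsArtinian R ((M ⧸ T) ⧸ sub) :=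
      isArtinian_of_linearEquiv (Submodule.quotientQuotientEquivQuotient T S hTS).symm
    haveI h2 : IsArtinian R sub := by
      apply isArtinian_of_torsion_max _ (maximalIdeal R)
      intro r hr y
      rcases y with ⟨y, hy⟩
      obtain ⟨x, hx, rfl⟩ := hy
      apply Subtype.ext
      show r • T.mkQ x = 0
      rw [← map_smul, Submodule.mkQ_apply, Submodule.Quotient.mk_eq_zero]
      have : r • x ∈ (maximalIdeal R) • S := Submodule.smul_mem_smul hr hx
      rwa [hS, ← mul_smul, ← pow_succ'] at this
    exact (isArtinian_iff_submodule_quotient sub).mpr ⟨h2, h1⟩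

lemma isArtinian_quot_smul (J : Ideal R) {k : ℕ} (hk : maximalIdeal R ^ k ≤ J) :
    IsArtinian R (M ⧸ (J • (⊤ : Submodule R M))) := by
  haveI := isArtinian_quot_pow_smul (R := R) (M := M) k
  have hle : (maximalIdeal R ^ k) • (⊤ : Submodule R M) ≤ J • ⊤ := Submodule.smul_mono_left hk
  set A : Submodule R M := (maximalIdeal R ^ k) • ⊤
  set B : Submodule R M := J • ⊤
  refine isArtinian_of_surjective (M ⧸ A) (A.liftQ B.mkQ (by rw [Submodule.ker_mkQ]; exact hle)) ?_
  intro y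
  obtain ⟨z, rfl⟩ := B.mkQ_surjective y
  exact ⟨A.mkQ z, by rw [Submodule.mkQ_apply, Submodule.liftQ_apply]⟩

end Art

/-- `M` is `I`-Ulrich (`e_R(I,M) = ℓ_R(M/IM)`) iff `IM = xM`, for a minimal
reduction `(x)` of `I`. -/
theorem stmt2 (R : Type*) [CommRing R] [IsLocalRing R] [IsNoetherianRing R]
    (hdim : ringKrullDim R = 1)
    (hCM : ∃ r ∈ maximalIdeal R, r ∈ nonZeroDivisors R)
    (I : Ideal R) (hI : I.radical = maximalIdeal R)
    (M : Type*) [AddCommGroup M] [Module R M] [Module.Finite R M]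
    (hTF : TorsionFree R M)
    (x : R) (hx : IsMinimalReduction R I x) :
    ((hsMult R I M : ℕ∞) : WithBot ℕ∞) = mlen R (M ⧸ (I • (⊤ : Submodule R M))) ↔
      I • (⊤ : Submodule R M) = Ideal.span {x} • (⊤ : Submodule R M) := by
  classical
  obtain ⟨hxI, N, hN⟩ := hx
  obtain ⟨r, hrm, hrnzd⟩ := hCM
  obtain ⟨k1, hk1⟩ : ∃ k : ℕ, maximalIdeal R ^ k ≤ I :=
    Ideal.exists_pow_le_of_le_radical_of_fg (hI ▸ le_rfl) (IsNoetherian.noetherian _)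
  have hIx : I ^ (N + 1) ≤ Ideal.span {x} := by
    rw [hN N le_rfl]; exact Ideal.mul_le_left
  have hmrad : maximalIdeal R ≤ (Ideal.span {x}).radical := by
    have h1 : maximalIdeal R ≤ I.radical := le_of_eq hI.symm
    have h2 : I.radical = (I ^ (N+1)).radical := (Ideal.radical_pow I (Nat.succ_ne_zero N)).symm
    exact h1.trans (le_trans (le_of_eq h2) (Ideal.radical_mono hIx))
  obtain ⟨k2, hk2⟩ : ∃ k : ℕ, maximalIdeal R ^ k ≤ Ideal.span {x} :=
    Ideal.exists_pow_le_of_le_radical_of_fg hmrad (IsNoetherian.noetherian _)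
  -- x is a nonzerodivisor
  have hxnzd : x ∈ nonZeroDivisors R := by
    rw [mem_nonZeroDivisors_iff_right]
    intro y hy
    have hrk : r ^ k2 ∈ Ideal.span {x} := hk2 (Ideal.pow_mem_pow hrm k2)
    obtain ⟨c, hc⟩ := Ideal.mem_span_singleton'.mp hrk
    have h0 : y * r ^ k2 = 0 := by
      rw [← hc]
      calc y * (c * x) = (y * x) * c := by ring
        _ = 0 := by rw [hy, zero_mul]
    exact mem_nonZeroDivisors_iff_right.mp (pow_mem hrnzd k2) y h0
  have hxinj : ∀ m1 : M, x • m1 = 0 → m1 = 0 := fun m1 h => hTF x hxnzd m1 h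
  -- finite length of quotients
  have hfl : ∀ (J : Ideal R), (∃ k, maximalIdeal R ^ k ≤ J) →
      ∃ c : ℕ, mlen R (M ⧸ (J • (⊤ : Submodule R M))) = ((c : ℕ∞) : WithBot ℕ∞) := by
    rintro J ⟨k, hk⟩
    haveI := isArtinian_quot_smul (M := M) J hk
    exact mlen_nat_of_isFiniteLength
      (isFiniteLength_iff_isNoetherian_isArtinian.mpr ⟨inferInstance, inferInstance⟩)
  -- the key length identity
  have key : ∀ n ≥ N, mlen R (M ⧸ (I ^ (n+1) • (⊤ : Submodule R M))) =
      mlen R (M ⧸ (I ^ n • (⊤ : Submodule R M))) +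
        mlen R (M ⧸ (Ideal.span {x} • (⊤ : Submodule R M))) := by
    intro n hn
    set xM : Submodule R M := Ideal.span {x} • ⊤ with hxM
    set S : Submodule R M := I ^ n • ⊤ with hSdef
    set T : Submodule R M := I ^ (n+1) • ⊤ with hTdef
    have hTeq : T = x • S := by
      rw [hTdef, hN n hn, mul_smul, Submodule.ideal_span_singleton_smul, hSdef]
    have hTxM : T ≤ xM := by
      rw [hTdef, hN n hn, mul_smul, hxM]
      exact Submodule.smul_mono le_rfl le_top
    let f : M →ₗ[R] M := LinearMap.lsmul R M x
    let g : M →ₗ[R] M ⧸ T := T.mkQ.comp f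
    have hker : LinearMap.ker g = S := by
      ext m1
      simp only [g, f, LinearMap.mem_ker, LinearMap.coe_comp, Function.comp_apply,
        LinearMap.lsmul_apply, Submodule.mkQ_apply, Submodule.Quotient.mk_eq_zero]
      rw [hTeq]
      constructor
      · intro h
        obtain ⟨s, hsS, hsx⟩ := mem_psmul_iff.mp h
        have h0 : x • (s - m1) = 0 := by rw [smul_sub, hsx, sub_self]
        have h1 := hxinj _ h0
        have h2 : s = m1 := by rwa [sub_eq_zero] at h1
        rwa [← h2]
      · intro h
        exact Submodule.smul_mem_pointwise_smul m1 x S h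
    have hrange : LinearMap.range g = Submodule.map T.mkQ xM := by
      rw [show LinearMap.range g = Submodule.map T.mkQ (LinearMap.range f) from
        (LinearMap.range_comp f T.mkQ)]
      congr 1
      ext m1
      simp only [LinearMap.mem_range, f, LinearMap.lsmul_apply]
      rw [hxM, Submodule.ideal_span_singleton_smul]
      constructor
      · rintro ⟨m2, rfl⟩
        exact Submodule.smul_mem_pointwise_smul m2 x ⊤ trivial
      · intro h
        obtain ⟨s, _, hsx⟩ := mem_psmul_iff.mp h
        exact ⟨s, hsx⟩
    have e1 : mlen R (M ⧸ S) = mlen R (Submodule.map T.mkQ xM) := by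
      rw [← hker, ← hrange]
      exact mlen_congr g.quotKerEquivRange
    have e2 : mlen R (M ⧸ T) =
        mlen R (Submodule.map T.mkQ xM) + mlen R ((M ⧸ T) ⧸ (Submodule.map T.mkQ xM)) :=
      mlen_add _
    have e3 : mlen R ((M ⧸ T) ⧸ (Submodule.map T.mkQ xM)) = mlen R (M ⧸ xM) :=
      mlen_congr (Submodule.quotientQuotientEquivQuotient T xM hTxM)
    rw [e2, ← e1, e3]
  -- the multiplicity equals ℓ(M/xM)
  obtain ⟨cx, hcx⟩ := hfl (Ideal.span {x}) ⟨k2, hk2⟩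
  have hex : ∃ e : ℕ∞, ∀ᶠ n in atTop,
      mlen R (M ⧸ (I ^ (n + 1) • (⊤ : Submodule R M))) =
        mlen R (M ⧸ (I ^ n • (⊤ : Submodule R M))) + (e : WithBot ℕ∞) :=
    ⟨cx, eventually_atTop.mpr ⟨N, fun n hn => by rw [key n hn, hcx]⟩⟩
  have hLn : ∀ n : ℕ, ∃ c : ℕ,
      mlen R (M ⧸ (I ^ n • (⊤ : Submodule R M))) = ((c : ℕ∞) : WithBot ℕ∞) := by
    intro n
    exact hfl (I ^ n) ⟨k1 * n, by rw [pow_mul]; exact Ideal.pow_right_mono hk1 n⟩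
  have hval : hsMult R I M = cx := by
    unfold hsMult
    rw [dif_pos hex]
    obtain ⟨n0, hn0⟩ := eventually_atTop.mp hex.choose_spec
    set n := max n0 N with hndef
    have h1 := hn0 n (le_max_left _ _)
    have h2 := key n (le_max_right _ _)
    rw [hcx] at h2
    obtain ⟨c, hc⟩ := hLn n
    rw [h2, hc] at h1
    -- h1 : ↑c + ↑cx = ↑c + ↑(choose)
    rw [← WithBot.coe_add, ← WithBot.coe_add] at h1
    have h1' := WithBot.coe_injective h1
    exact (WithTop.add_left_cancel (WithTop.natCast_ne_top c) h1').symm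
  obtain ⟨cI, hcI⟩ := hfl I ⟨k1, hk1⟩
  have hIM1 : (I ^ 1) • (⊤ : Submodule R M) = I • ⊤ := by rw [pow_one]
  have hxMIM : Ideal.span {x} • (⊤ : Submodule R M) ≤ I • ⊤ :=
    Submodule.smul_mono_left (Ideal.span_le.mpr (by simpa using hxI))
  set xM : Submodule R M := Ideal.span {x} • ⊤ with hxM
  set IM : Submodule R M := I • ⊤ with hIM
  set A : Submodule R (M ⧸ xM) := Submodule.map xM.mkQ IM with hA
  have hadd : mlen R (M ⧸ xM) = mlen R A + mlen R (M ⧸ IM) := by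
    rw [mlen_add A, mlen_congr (Submodule.quotientQuotientEquivQuotient xM IM hxMIM)]
  obtain ⟨cA, hcA⟩ : ∃ c : ℕ, mlen R A = ((c : ℕ∞) : WithBot ℕ∞) := by
    haveI := isArtinian_quot_smul (M := M) (Ideal.span {x}) hk2
    haveI : IsArtinian R A := inferInstance
    exact mlen_nat_of_isFiniteLength
      (isFiniteLength_iff_isNoetherian_isArtinian.mpr ⟨inferInstance, inferInstance⟩)
  rw [hval, hcI]
  constructor
  · intro h
    -- h : ↑cx = ↑cI ; combine with hadd
    have hnum : (cx : ℕ∞) = (cA : ℕ∞) + cI := by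
      have := hadd
      rw [hcx, hcA, hcI, ← WithBot.coe_add] at this
      exact_mod_cast WithBot.coe_injective this
    have hcxcI : (cx : ℕ∞) = (cI : ℕ∞) := by exact_mod_cast WithBot.coe_injective h
    have hcA0 : cA = 0 := by
      have : (cA : ℕ∞) + cI = (0 : ℕ∞) + cI := by
        rw [zero_add, ← hnum]
        exact hcxcI
      have : (cA : ℕ∞) = 0 := WithTop.add_right_cancel (WithTop.natCast_ne_top cI) this
      exact_mod_cast this
    have hAbot : A = ⊥ := by
      apply eq_bot_of_mlen_eq_zero
      rw [hcA, hcA0]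
      norm_num
    have hIMxM : IM ≤ xM := by
      have hmap : Submodule.map xM.mkQ IM ≤ ⊥ := le_of_eq hAbot
      have h2 : IM ≤ Submodule.comap xM.mkQ ⊥ := Submodule.map_le_iff_le_comap.mp hmap
      simpa only [Submodule.comap_bot, Submodule.ker_mkQ] using h2
    exact le_antisymm hIMxM hxMIM
  · intro h
    rw [← hcI, ← hcx]
    exact mlen_congr (Submodule.quotEquivOfEq xM IM h.symm)
end

section
/- Let R be a one-dimensional Cohen-Macaulay local ring, I a non-principal m-primary ideal, (x) a minimal reduction of I, and r = min{n ≥ 0 : I^{n+1} = x I^n}. Then for every finitely generated torsion-free R-module M, the module I^{r-1} M has minimal multiplicity with respect to I, but the ideal I^{r-1} is not an I-Ulrich R-module. -/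
open IsLocalRing Filter

universe u

/-- for a non-principal `m`-primary ideal `I` with minimal reduction `(x)` and
`r = min{n ≥ 0 : I^{n+1} = xI^n}`, the module `I^{r-1}M` has minimal multiplicity with respect
to `I` for every f.g. torsion-free `M`, but the ideal `I^{r-1}` is not `I`-Ulrich. -/
theorem stmt6 (R : Type*) [CommRing R] [IsLocalRing R] [IsNoetherianRing R]
    (hdim : ringKrullDim R = 1)
    (hCM : ∃ r ∈ maximalIdeal R, r ∈ nonZeroDivisors R)
    (I : Ideal R) (hI : I.radical = maximalIdeal R)
    (hnp : ¬ ∃ a : R, I = Ideal.span {a})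
    (x : R) (hx : IsMinimalReduction R I x)
    (r : ℕ) (hr : r = sInf {n : ℕ | I ^ (n + 1) = Ideal.span {x} * I ^ n}) :
    (∀ (M : Type u) [AddCommGroup M] [Module R M] [Module.Finite R M],
        TorsionFree R M →
        I ^ 2 • (I ^ (r - 1) • (⊤ : Submodule R M)) =
          Ideal.span {x} • (I • (I ^ (r - 1) • (⊤ : Submodule R M)))) ∧
      I * I ^ (r - 1) ≠ Ideal.span {x} * I ^ (r - 1) := by
  set S : Set ℕ := {n : ℕ | I ^ (n + 1) = Ideal.span {x} * I ^ n} with hS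
  obtain ⟨hxI, N, hN⟩ := hx
  have hSne : S.Nonempty := ⟨N, hN N le_rfl⟩
  have hrS : r ∈ S := hr ▸ Nat.sInf_mem hSne
  have hr1 : 1 ≤ r := by
    rcases Nat.eq_zero_or_pos r with h0 | h
    · exfalso
      apply hnp
      refine ⟨x, ?_⟩
      have := hrS
      simp only [hS, Set.mem_setOf_eq, h0, zero_add, pow_zero, pow_one, mul_one] at this
      exact this
    · exact h
  constructor
  · intro M _ _ _ _
    have h1 : I ^ 2 • (I ^ (r - 1) • (⊤ : Submodule R M)) =
        (I ^ 2 * I ^ (r - 1)) • (⊤ : Submodule R M) := by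
      rw [← smul_eq_mul, Submodule.smul_assoc]
    have h2 : Ideal.span {x} • (I • (I ^ (r - 1) • (⊤ : Submodule R M))) =
        (Ideal.span {x} * (I * I ^ (r - 1))) • (⊤ : Submodule R M) := by
      rw [← smul_eq_mul, ← smul_eq_mul, Submodule.smul_assoc, Submodule.smul_assoc]
    rw [h1, h2]
    congr 1
    have hpow : I ^ 2 * I ^ (r - 1) = I ^ (r + 1) := by
      rw [← pow_add]
      congr 1
      omega
    have hpow2 : I * I ^ (r - 1) = I ^ r := by
      rw [← pow_succ']
      congr 1
      omega
    rw [hpow, hpow2]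
    exact hrS
  · intro hEq
    have hpow2 : I * I ^ (r - 1) = I ^ ((r - 1) + 1) := by
      rw [← pow_succ']
    have : r - 1 ∈ S := by rw [hS, Set.mem_setOf_eq, ← hpow2, hEq]
    have hle : r ≤ r - 1 := hr ▸ Nat.sInf_le (hr ▸ this)
    omega
end

section
/- Let R be a one-dimensional Cohen-Macaulay local ring, I a fractional ideal of R with μ_R(I) = 2. Then Hom_R(I, R) is isomorphic to the first syzygy Ω_R(I) of I; equivalently, there is a short exact sequence 0 → Hom_R(I,R) → R^2 → I → 0. -/
open IsLocalRing Filter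

section Aux

variable {R : Type*} [CommRing R] {M : Type*} [AddCommGroup M] [Module R M]

/-- The linear map `R² → M` determined by a pair of elements. -/
def gmap (a b : M) : (Fin 2 → R) →ₗ[R] M where
  toFun v := v 0 • a + v 1 • b
  map_add' v w := by
    simp only [Pi.add_apply, add_smul]
    abel
  map_smul' r v := by
    simp only [Pi.smul_apply, smul_eq_mul, mul_smul, RingHom.id_apply, smul_add]

@[simp] lemma gmap_apply (a b : M) (v : Fin 2 → R) : gmap a b v = v 0 • a + v 1 • b := rfl

/-- The linear map `Hom(M, R) → R²`, `φ ↦ (φ b, -φ a)`. -/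
def fmap (a b : M) : (M →ₗ[R] R) →ₗ[R] (Fin 2 → R) where
  toFun φ := ![φ b, -φ a]
  map_add' φ ψ := by
    funext i; fin_cases i <;> simp [neg_add, add_comm]
  map_smul' r φ := by
    funext i; fin_cases i <;> simp [mul_neg]

@[simp] lemma fmap_apply (a b : M) (φ : M →ₗ[R] R) : fmap a b φ = ![φ b, -φ a] := rfl

end Aux

set_option maxHeartbeats 1000000 in
/-- for a two-generated fractional ideal `I` of a one-dimensional CM local ring,
there is a short exact sequence `0 → Hom_R(I,R) → R² → I → 0`, so `Hom_R(I,R) ≅ Ω_R(I)`. -/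
theorem stmt10 (R : Type*) [CommRing R] [IsLocalRing R] [IsNoetherianRing R]
    (hdim : ringKrullDim R = 1)
    (hCM : ∃ r ∈ maximalIdeal R, r ∈ nonZeroDivisors R)
    (J : Submodule R (FractionRing R)) (hfg : J.FG)
    (hnzd : ∃ r ∈ nonZeroDivisors R, algebraMap R (FractionRing R) r ∈ J)
    (hmu : mu R ↥J = 2) :
    ∃ (f : (↥J →ₗ[R] R) →ₗ[R] (Fin 2 → R)) (g : (Fin 2 → R) →ₗ[R] ↥J),
      Function.Injective f ∧ Function.Surjective g ∧ LinearMap.range f = LinearMap.ker g := by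
  classical
  obtain ⟨c, hcnzd, hcJ⟩ := hnzd
  set Q := FractionRing R with hQdef
  have hinj : Function.Injective (algebraMap R Q) := IsFractionRing.injective R Q
  have hcu : IsUnit (algebraMap R Q c) := IsLocalization.map_units Q ⟨c, hcnzd⟩
  -- extract a pair of generators from `mu R J = 2`
  have hne : {n | ∃ s : Finset ↥J, s.card = n ∧ Submodule.span R (s : Set ↥J) = ⊤}.Nonempty := by
    by_contra h
    rw [Set.not_nonempty_iff_eq_empty] at h
    rw [mu, h, Nat.sInf_empty] at hmu
    exact two_ne_zero hmu.symm
  have h2 : mu R ↥J ∈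
      {n | ∃ s : Finset ↥J, s.card = n ∧ Submodule.span R (s : Set ↥J) = ⊤} :=
    Nat.sInf_mem hne
  rw [hmu] at h2
  obtain ⟨s, hcard, hspan⟩ := h2
  obtain ⟨a, b, -, rfl⟩ := Finset.card_eq_two.mp hcard
  have hspan' : Submodule.span R ({a, b} : Set ↥J) = ⊤ := by simpa using hspan
  -- the key identity: `φ(y) z = φ(z) y` inside `Q` for any `φ : J → R`
  have key : ∀ (φ : ↥J →ₗ[R] R) (y z : ↥J),
      algebraMap R Q (φ y) * (z : Q) = algebraMap R Q (φ z) * (y : Q) := by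
    intro φ y z
    obtain ⟨⟨ry, sy⟩, hy : IsLocalization.mk' Q ry sy = (y : Q)⟩ := IsLocalization.mk'_surjective (nonZeroDivisors R) (y : Q)
    obtain ⟨⟨rz, sz⟩, hz : IsLocalization.mk' Q rz sz = (z : Q)⟩ := IsLocalization.mk'_surjective (nonZeroDivisors R) (z : Q)
    have hy2 : algebraMap R Q (sy : R) * (y : Q) = algebraMap R Q ry := by
      rw [← hy, IsLocalization.mk'_spec']
    have hz2 : algebraMap R Q (sz : R) * (z : Q) = algebraMap R Q rz := by
      rw [← hz, IsLocalization.mk'_spec']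
    have heq : (rz * (sy : R)) • y = (ry * (sz : R)) • z := by
      apply Subtype.ext
      show (rz * (sy : R)) • (y : Q) = (ry * (sz : R)) • (z : Q)
      rw [Algebra.smul_def, Algebra.smul_def, map_mul, map_mul]
      linear_combination algebraMap R Q rz * hy2 - algebraMap R Q ry * hz2
    have hφ : rz * (sy : R) * φ y = ry * (sz : R) * φ z := by
      have h := congrArg φ heq
      simpa [map_smul, smul_eq_mul] using h
    have hu : IsUnit (algebraMap R Q (sy : R) * algebraMap R Q (sz : R)) :=
      (IsLocalization.map_units Q sy).mul (IsLocalization.map_units Q sz)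
    apply hu.mul_left_cancel
    have hφ' := congrArg (algebraMap R Q) hφ
    rw [map_mul, map_mul, map_mul, map_mul] at hφ'
    linear_combination (algebraMap R Q (φ y) * algebraMap R Q (sy : R)) * hz2 -
      (algebraMap R Q (φ z) * algebraMap R Q (sz : R)) * hy2 + hφ'
  -- surjectivity of `g`
  have hgsurj : Function.Surjective (gmap a b : (Fin 2 → R) →ₗ[R] ↥J) := by
    intro x
    have hx : x ∈ Submodule.span R ({a, b} : Set ↥J) := hspan' ▸ Submodule.mem_top
    obtain ⟨u, t, hut⟩ := Submodule.mem_span_pair.mp hx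
    exact ⟨![u, t], by simp [hut]⟩
  -- injectivity of `f`
  have hfinj : Function.Injective (fmap a b : (↥J →ₗ[R] R) →ₗ[R] (Fin 2 → R)) := by
    rw [← LinearMap.ker_eq_bot]
    apply (Submodule.eq_bot_iff _).mpr
    intro φ hφ
    have h := LinearMap.mem_ker.mp hφ
    have hb0 : φ b = 0 := by simpa using congrFun h 0
    have ha0 : φ a = 0 := by
      have h1 := congrFun h 1
      simpa [neg_eq_zero] using h1
    ext x
    have hx : x ∈ Submodule.span R ({a, b} : Set ↥J) := hspan' ▸ Submodule.mem_top
    obtain ⟨u, t, hut⟩ := Submodule.mem_span_pair.mp hx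
    simp [← hut, ha0, hb0]
  -- range f ⊆ ker g
  have hsub1 : LinearMap.range (fmap a b : (↥J →ₗ[R] R) →ₗ[R] (Fin 2 → R)) ≤
      LinearMap.ker (gmap a b : (Fin 2 → R) →ₗ[R] ↥J) := by
    rintro _ ⟨φ, rfl⟩
    rw [LinearMap.mem_ker]
    show (fmap a b φ) 0 • a + (fmap a b φ) 1 • b = 0
    simp only [fmap_apply, Matrix.cons_val_zero, Matrix.cons_val_one, Matrix.head_cons]
    apply Subtype.ext
    simp only [Submodule.coe_add, SetLike.val_smul, ZeroMemClass.coe_zero]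
    rw [Algebra.smul_def, Algebra.smul_def, map_neg]
    linear_combination key φ b a
  -- ker g ⊆ range f
  have hsub2 : LinearMap.ker (gmap a b : (Fin 2 → R) →ₗ[R] ↥J) ≤
      LinearMap.range (fmap a b : (↥J →ₗ[R] R) →ₗ[R] (Fin 2 → R)) := by
    intro v hv
    have hv' : algebraMap R Q (v 0) * (a : Q) + algebraMap R Q (v 1) * (b : Q) = 0 := by
      have h := congrArg Subtype.val (LinearMap.mem_ker.mp hv)
      simpa [Algebra.smul_def] using h
    set ψ : (Fin 2 → R) →ₗ[R] R := gmap (-(v 1)) (v 0) with hψ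
    have hle : LinearMap.ker (gmap a b : (Fin 2 → R) →ₗ[R] ↥J) ≤ LinearMap.ker ψ := by
      intro w hw
      have hw' : algebraMap R Q (w 0) * (a : Q) + algebraMap R Q (w 1) * (b : Q) = 0 := by
        have h := congrArg Subtype.val (LinearMap.mem_ker.mp hw)
        simpa [Algebra.smul_def] using h
      rw [LinearMap.mem_ker]
      show w 0 • (-(v 1)) + w 1 • (v 0) = 0
      have tgoal : w 1 * v 0 - w 0 * v 1 = 0 := by
        apply hinj
        rw [map_zero]
        have tA : algebraMap R Q (w 1 * v 0 - w 0 * v 1) * (a : Q) = 0 := by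
          rw [map_sub, map_mul, map_mul]
          linear_combination algebraMap R Q (w 1) * hv' - algebraMap R Q (v 1) * hw'
        have tB : algebraMap R Q (w 1 * v 0 - w 0 * v 1) * (b : Q) = 0 := by
          rw [map_sub, map_mul, map_mul]
          linear_combination (-(algebraMap R Q (w 0))) * hv' + algebraMap R Q (v 0) * hw'
        have hcmem : (⟨algebraMap R Q c, hcJ⟩ : ↥J) ∈ Submodule.span R ({a, b} : Set ↥J) :=
          hspan' ▸ Submodule.mem_top
        obtain ⟨u, t, hut⟩ := Submodule.mem_span_pair.mp hcmem
        have hut' : algebraMap R Q u * (a : Q) + algebraMap R Q t * (b : Q)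
            = algebraMap R Q c := by
          have h := congrArg Subtype.val hut
          simpa [Algebra.smul_def] using h
        have hc0 : algebraMap R Q (w 1 * v 0 - w 0 * v 1) * algebraMap R Q c = 0 := by
          linear_combination algebraMap R Q u * tA + algebraMap R Q t * tB -
            algebraMap R Q (w 1 * v 0 - w 0 * v 1) * hut'
        have h0 : algebraMap R Q c * algebraMap R Q (w 1 * v 0 - w 0 * v 1)
            = algebraMap R Q c * 0 := by
          rw [mul_zero, mul_comm]; exact hc0
        exact hcu.mul_left_cancel h0
      simp only [smul_eq_mul]
      linear_combination tgoal
    set e := (gmap a b : (Fin 2 → R) →ₗ[R] ↥J).quotKerEquivOfSurjective hgsurj with he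
    set φ := ((LinearMap.ker (gmap a b : (Fin 2 → R) →ₗ[R] ↥J)).liftQ ψ hle) ∘ₗ (e.symm : ↥J →ₗ[R] _) with hφdef
    have hφg : ∀ w : Fin 2 → R, φ (gmap a b w) = ψ w := by
      intro w
      have h1 : e (Submodule.Quotient.mk w) = gmap a b w := rfl
      have h2 : e.symm (gmap a b w) = Submodule.Quotient.mk w := by
        rw [← h1, LinearEquiv.symm_apply_apply]
      show (LinearMap.ker (gmap a b : (Fin 2 → R) →ₗ[R] ↥J)).liftQ ψ hle
          (e.symm (gmap a b w)) = ψ w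
      rw [h2, Submodule.liftQ_apply]
    have hga : gmap a b ![(1 : R), 0] = a := by simp
    have hgb : gmap a b ![(0 : R), 1] = b := by simp
    have hb' : φ b = v 0 := by rw [← hgb, hφg]; simp [hψ]
    have ha' : φ a = -(v 1) := by rw [← hga, hφg]; simp [hψ]
    refine ⟨φ, ?_⟩
    funext i
    fin_cases i <;> simp [ha', hb']
  exact ⟨fmap a b, gmap a b, hfinj, hgsurj, le_antisymm hsub1 hsub2⟩
end

section
/- Let R be a one-dimensional Cohen-Macaulay local ring, I an m-primary ideal, and M a finitely generated torsion-free R-module having minimal multiplicity with respect to I. Then for every finitely generated torsion-free R-module N, the module Hom_R(IM, N) is I-Ulrich. -/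
open IsLocalRing Filter

open Pointwise

universe u

/-- if `M` has minimal multiplicity with respect to `I`, then `Hom_R(IM, N)` is
`I`-Ulrich for every f.g. torsion-free `R`-module `N`. -/
theorem stmt15 (R : Type*) [CommRing R] [IsLocalRing R] [IsNoetherianRing R]
    [Infinite (ResidueField R)]
    (hdim : ringKrullDim R = 1)
    (hCM : ∃ r ∈ maximalIdeal R, r ∈ nonZeroDivisors R)
    (I : Ideal R) (hI : I.radical = maximalIdeal R)
    (M : Type*) [AddCommGroup M] [Module R M] [Module.Finite R M] (hTF : TorsionFree R M)
    (hmm : ∃ x : R, IsMinimalReduction R I x ∧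
      I ^ 2 • (⊤ : Submodule R M) = Ideal.span {x} • (I • (⊤ : Submodule R M))) :
    ∀ (N : Type u) [AddCommGroup N] [Module R N] [Module.Finite R N],
      TorsionFree R N →
      ∃ y : R, IsMinimalReduction R I y ∧
        I • (⊤ : Submodule R (↥(I • (⊤ : Submodule R M)) →ₗ[R] N)) =
          Ideal.span {y} • (⊤ : Submodule R (↥(I • (⊤ : Submodule R M)) →ₗ[R] N)) := by
  classical
  obtain ⟨x, hxred, hxM⟩ := hmm
  obtain ⟨r, hrm, hrnzd⟩ := hCM
  have hxI := hxred.1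
  obtain ⟨N0, hN0⟩ := hxred.2
  -- x is a nonzerodivisor
  have hxnzd : x ∈ nonZeroDivisors R := by
    have hrrad : r ∈ I.radical := by rw [hI]; exact hrm
    obtain ⟨k, hk⟩ := hrrad
    have hpow : I ^ (N0 + 1) ≤ Ideal.span {x} := by
      rw [hN0 N0 le_rfl]
      exact Ideal.mul_le_left
    have hmem : (r ^ k) ^ (N0 + 1) ∈ Ideal.span {x} :=
      hpow (Ideal.pow_mem_pow hk _)
    rw [Ideal.mem_span_singleton] at hmem
    obtain ⟨c, hc⟩ := hmem
    rw [mem_nonZeroDivisors_iff_right]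
    intro z hz
    have hnz : (r ^ k) ^ (N0 + 1) ∈ nonZeroDivisors R := pow_mem (pow_mem hrnzd k) _
    apply mem_nonZeroDivisors_iff_right.mp hnz
    rw [hc, ← mul_assoc, hz, zero_mul]
  set T : Submodule R M := I • ⊤ with hTdef
  have hIT : I • T = Ideal.span {x} • T := by
    have h2 : I ^ 2 • (⊤ : Submodule R M) = I • T := by
      rw [pow_two, ← Ideal.smul_eq_mul, Submodule.smul_assoc]
    rw [← h2, hxM]
  have key : ∀ a ∈ I, ∀ t : T, ∃ s : T, x • (s : M) = a • (t : M) := by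
    intro a ha t
    have h1 : a • (t : M) ∈ I • T := Submodule.smul_mem_smul ha t.2
    rw [hIT, Submodule.ideal_span_singleton_smul] at h1
    obtain ⟨s, hs, hsx⟩ := Submodule.mem_map.mp h1
    exact ⟨⟨s, hs⟩, hsx⟩
  have hinj : ∀ u v : M, x • u = x • v → u = v := by
    intro u v h
    have := hTF x hxnzd (u - v) (by rw [smul_sub, h, sub_self])
    exact sub_eq_zero.mp this
  intro N _ _ _ _
  refine ⟨x, hxred, ?_⟩
  apply le_antisymm
  · intro z hz
    refine Submodule.smul_induction_on hz ?_ ?_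
    · intro a ha f _
      have hc : ∀ t : T, ∃ s : T, x • (s : M) = a • (t : M) := key a ha
      let c : T → T := fun t => (hc t).choose
      have hcspec : ∀ t : T, x • ((c t : T) : M) = a • (t : M) := fun t => (hc t).choose_spec
      have hcT : ∀ t : T, x • c t = a • t := by
        intro t
        apply Subtype.ext
        simpa using hcspec t
      let cl : T →ₗ[R] T :=
        { toFun := c
          map_add' := by
            intro t t'
            apply Subtype.ext
            apply hinj
            have h1 := hcspec (t + t')
            have h2 := hcspec t
            have h3 := hcspec t'
            simp only [Submodule.coe_add, smul_add] at h1 ⊢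
            rw [h1, h2, h3]
          map_smul' := by
            intro rr t
            apply Subtype.ext
            apply hinj
            have h1 := hcspec (rr • t)
            have h2 := hcspec t
            simp only [SetLike.val_smul, RingHom.id_apply] at h1 ⊢
            rw [h1, smul_comm x rr, h2, smul_comm] }
      have hfg : a • f = x • (f.comp cl) := by
        ext t
        simp only [LinearMap.smul_apply, LinearMap.comp_apply]
        rw [← f.map_smul, ← f.map_smul]
        congr 1
        exact (hcT t).symm
      rw [hfg]
      exact Submodule.smul_mem_smul (Ideal.mem_span_singleton_self x) trivial
    · intro u v hu hv
      exact Submodule.add_mem _ hu hv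
  · apply Submodule.smul_mono_left
    rw [Ideal.span_le]
    simpa using hxI
end

section
/- Let R be a one-dimensional Cohen-Macaulay local ring with total ring of fractions Q, I an m-primary ideal that is reflexive (i.e., (R :_Q (R :_Q I)) = I), and x ∈ I a non zero-divisor. If x(R :_Q I) = I(R :_Q I), then I = x(I :_Q I), and hence I^2 = xI (I is stable). -/
open IsLocalRing Filter

/-- if `I` is a reflexive `m`-primary ideal (`(R :_Q (R :_Q I)) = I`), `x ∈ I` a
non zero-divisor, and `x(R :_Q I) = I(R :_Q I)`, then `I = x(I :_Q I)` and hence `I² = xI`. -/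
theorem stmt17 (R : Type*) [CommRing R] [IsLocalRing R] [IsNoetherianRing R]
    (hdim : ringKrullDim R = 1)
    (hCM : ∃ r ∈ maximalIdeal R, r ∈ nonZeroDivisors R)
    (I : Ideal R) (hI : I.radical = maximalIdeal R)
    (hrefl :
      colonQ R (1 : Submodule R (FractionRing R))
          (colonQ R (1 : Submodule R (FractionRing R))
            (Submodule.map (Algebra.linearMap R (FractionRing R)) I)) =
        Submodule.map (Algebra.linearMap R (FractionRing R)) I)
    (x : R) (hxI : x ∈ I) (hx : x ∈ nonZeroDivisors R)
    (h : Submodule.span R {algebraMap R (FractionRing R) x} *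
          colonQ R (1 : Submodule R (FractionRing R))
            (Submodule.map (Algebra.linearMap R (FractionRing R)) I) =
        Submodule.map (Algebra.linearMap R (FractionRing R)) I *
          colonQ R (1 : Submodule R (FractionRing R))
            (Submodule.map (Algebra.linearMap R (FractionRing R)) I)) :
    Submodule.map (Algebra.linearMap R (FractionRing R)) I =
        Submodule.span R {algebraMap R (FractionRing R) x} *
          colonQ R (Submodule.map (Algebra.linearMap R (FractionRing R)) I)
            (Submodule.map (Algebra.linearMap R (FractionRing R)) I) ∧
      I ^ 2 = Ideal.span {x} * I := by
  classical
  set K := FractionRing R with hK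
  set φ := algebraMap R K with hphi
  set I' := Submodule.map (Algebra.linearMap R K) I with hI'
  set J := colonQ R (1 : Submodule R K) I' with hJdef
  set E := colonQ R I' I' with hEdef
  have hxI' : φ x ∈ I' := ⟨x, hxI, rfl⟩
  have hux : IsUnit (φ x) := IsLocalization.map_units K ⟨x, hx⟩
  obtain ⟨u, hu⟩ := hux
  have mem_colonQ : ∀ {P Q : Submodule R K} {q : K},
      q ∈ colonQ R P Q ↔ ∀ k ∈ Q, q * k ∈ P := fun {P Q q} => Iff.rfl
  have key : I' = Submodule.span R {φ x} * E := by
    apply le_antisymm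
    · intro a ha
      set q : K := ↑u⁻¹ * a with hq
      have hxq : φ x * q = a := by
        rw [hq, ← mul_assoc, ← hu, Units.mul_inv, one_mul]
      have hqE : q ∈ E := by
        rw [hEdef, mem_colonQ]
        intro b hb
        rw [← hrefl, mem_colonQ]
        intro j hj
        have hbj : b * j ∈ Submodule.span R {φ x} * J := by
          rw [h]; exact Submodule.mul_mem_mul hb hj
        obtain ⟨j'', hj'', hjx⟩ := Submodule.mem_span_singleton_mul.mp hbj
        have hcalc : q * b * j = a * j'' := by
          have h1 : q * b * j = ↑u⁻¹ * (a * (b * j)) := by rw [hq]; ring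
          rw [h1, ← hjx, ← hu]
          calc ↑u⁻¹ * (a * (↑u * j'')) = (↑u⁻¹ * ↑u) * (a * j'') := by ring
            _ = a * j'' := by rw [Units.inv_mul, one_mul]
        rw [hcalc]
        have := (mem_colonQ.mp hj'') a ha
        rwa [mul_comm] at this
      exact hxq ▸ Submodule.mul_mem_mul (Submodule.mem_span_singleton_self _) hqE
    · refine Submodule.mul_le.mpr fun a ha b hb => ?_
      obtain ⟨r, rfl⟩ := Submodule.mem_span_singleton.mp ha
      rw [smul_mul_assoc]
      exact Submodule.smul_mem _ _ (by rw [mul_comm]; exact (mem_colonQ.mp hb) _ hxI')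
  have honeE : (1 : K) ∈ E := mem_colonQ.mpr fun k hk => by simpa using hk
  have hEI : E * I' = I' := by
    apply le_antisymm
    · exact Submodule.mul_le.mpr fun e he b hb => (mem_colonQ.mp he) b hb
    · intro a ha
      simpa using Submodule.mul_mem_mul honeE ha
  have hmap : ∀ A B : Ideal R,
      Submodule.map (Algebra.linearMap R K) (A * B) =
        Submodule.map (Algebra.linearMap R K) A * Submodule.map (Algebra.linearMap R K) B :=
    fun A B => Submodule.map_mul A B (Algebra.ofId R K)
  have hII : I' * I' = Submodule.span R {φ x} * I' := by
    nth_rewrite 1 [key]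
    rw [mul_assoc, hEI]
  refine ⟨key, ?_⟩
  have hinj : Function.Injective (Algebra.linearMap R K) :=
    IsFractionRing.injective R K
  apply Submodule.map_injective_of_injective hinj
  rw [pow_two, hmap, hmap, ← hI', hII]
  congr 1
  rw [Ideal.span, Submodule.map_span, Set.image_singleton]
  rfl
end
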